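/- For any long positive root μ, the inversion set of the inverse of the minimal-length element w_{θ,μ} ∈ W taking the highest root θ to μ is N(w_{θ,μ}⁻¹) = {ν ∈ Δ⁺ | (ν, μ∨) = −1}. -/

import Mathlib

open scoped RealInnerProductSpace

/-- Data of a crystallographic root system in a real inner product space `V`,
with simple roots indexed by a finite type `ι`. -/
structure RSD (ι V : Type*) [Fintype ι] [NormedAddCommGroup V]
    [InnerProductSpace ℝ V] where
  /-- The simple roots. -/
  sroot : ι → V
  /-- The set of roots. -/
  Δ : Set V
  finite : Δ.Finite
  zero_not_mem : (0 : V) ∉ Δ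
  sroot_mem : ∀ i, sroot i ∈ Δ
  sroot_indep : LinearIndependent ℝ sroot
  neg_mem : ∀ a ∈ Δ, -a ∈ Δ
  /-- Crystallographic condition. -/
  crys : ∀ a ∈ Δ, ∀ b ∈ Δ, ∃ n : ℤ, 2 * ⟪a, b⟫ / ⟪a, a⟫ = (n : ℝ)
  /-- The reflection associated with a vector (only specified on roots). -/
  reflect : V → (V ≃ₗ[ℝ] V)
  reflect_apply : ∀ a ∈ Δ, ∀ v : V,
    reflect a v = v - (2 * ⟪a, v⟫ / ⟪a, a⟫) • a
  reflect_root_mem : ∀ a ∈ Δ, ∀ b ∈ Δ, reflect a b ∈ Δ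
  /-- Every root is a nonnegative or nonpositive integral combination of simple roots. -/
  decomp : ∀ a ∈ Δ, (∃ c : ι → ℕ, a = ∑ i, (c i : ℝ) • sroot i) ∨
      (∃ c : ι → ℕ, a = -∑ i, (c i : ℝ) • sroot i)
  /-- Irreducibility. -/
  irred : ∀ S T : Set V, S ∪ T = Δ → (∀ a ∈ S, ∀ b ∈ T, ⟪a, b⟫ = 0) →
      S = ∅ ∨ T = ∅

namespace RSD

variable {ι V : Type*} [Fintype ι] [NormedAddCommGroup V] [InnerProductSpace ℝ V]
  (R : RSD ι V)

/-- The set of positive roots. -/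
def pos : Set V := {a ∈ R.Δ | ∃ c : ι → ℕ, a = ∑ i, (c i : ℝ) • R.sroot i}

/-- `R.le μ γ` means `μ ≼ γ`, i.e. `γ - μ` is a nonnegative integral combination
of simple roots. -/
def le (μ γ : V) : Prop := ∃ c : ι → ℕ, γ - μ = ∑ i, (c i : ℝ) • R.sroot i

/-- The Weyl group, generated by the simple reflections. -/
def W : Subgroup (V ≃ₗ[ℝ] V) :=
  Subgroup.closure (Set.range fun i => R.reflect (R.sroot i))

/-- The inversion set `N(w) = {γ ∈ Δ⁺ ∣ w γ ∈ -Δ⁺}`. -/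
def N (w : V ≃ₗ[ℝ] V) : Set V := {γ ∈ R.pos | -(w γ) ∈ R.pos}

/-- The length of `w`: minimal length of an expression of `w` as a product of
simple reflections. -/
noncomputable def len (w : V ≃ₗ[ℝ] V) : ℕ :=
  sInf {n | ∃ l : List ι, l.length = n ∧
    (l.map fun i => R.reflect (R.sroot i)).prod = w}

/-- The coroot `a∨ = 2a/(a,a)`. -/
@[nolint unusedArguments]
noncomputable def coroot (_R : RSD ι V) (a : V) : V := (2 / ⟪a, a⟫) • a

/-- `ρ`, the half-sum of the positive roots. -/
noncomputable def rho : V :=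
  (2⁻¹ : ℝ) • ∑ a ∈ (R.finite.subset (fun a ha => ha.1 : R.pos ⊆ R.Δ)).toFinset, a

/-- `R.HtIs γ n` : the height of `γ` is `n`. -/
def HtIs (γ : V) (n : ℕ) : Prop :=
  ∃ c : ι → ℕ, γ = ∑ i, (c i : ℝ) • R.sroot i ∧ ∑ i, c i = n

/-- A long root: a root of maximal squared length. -/
def IsLong (γ : V) : Prop := γ ∈ R.Δ ∧ ∀ b ∈ R.Δ, ⟪b, b⟫ ≤ ⟪γ, γ⟫

/-- The highest root. -/
def IsHighest (θ : V) : Prop := θ ∈ R.pos ∧ ∀ γ ∈ R.pos, R.le γ θ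

/-- Simply-laced: all roots have the same length. -/
def SimplyLaced : Prop := ∀ a ∈ R.Δ, ∀ b ∈ R.Δ, ⟪a, a⟫ = ⟪b, b⟫

/-- A minimal inversion complete set. -/
def IsMICS (F : Set (V ≃ₗ[ℝ] V)) : Prop :=
  (∀ w ∈ F, w ∈ R.W) ∧ (⋃ w ∈ F, R.N w) = R.pos ∧
    ∀ F' ⊂ F, (⋃ w ∈ F', R.N w) ≠ R.pos

end RSD

namespace RSD

variable {ι V : Type*} [Fintype ι] [NormedAddCommGroup V] [InnerProductSpace ℝ V]
  (R : RSD ι V)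

lemma root_ne_zero {a : V} (ha : a ∈ R.Δ) : a ≠ 0 := fun h => R.zero_not_mem (h ▸ ha)

lemma inner_self_pos' {a : V} (ha : a ∈ R.Δ) : 0 < ⟪a, a⟫ := by
  rcases lt_or_ge 0 ⟪a, a⟫ with h | h
  · exact h
  · exact absurd (real_inner_self_nonpos.1 h) (R.root_ne_zero ha)

end RSD

/-- Orthogonality of a linear automorphism. -/
def Orth {V : Type*} [NormedAddCommGroup V] [InnerProductSpace ℝ V] (u : V ≃ₗ[ℝ] V) : Prop := ∀ x y : V, ⟪u x, u y⟫ = ⟪x, y⟫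

namespace RSD

variable {ι V : Type*} [Fintype ι] [NormedAddCommGroup V] [InnerProductSpace ℝ V]
  (R : RSD ι V)

lemma reflect_orth {a : V} (ha : a ∈ R.Δ) : Orth (R.reflect a) := by
  intro x y
  rw [R.reflect_apply a ha x, R.reflect_apply a ha y]
  have h := (R.inner_self_pos' ha).ne'
  simp only [inner_sub_left, inner_sub_right, real_inner_smul_left, real_inner_smul_right]
  rw [real_inner_comm x a, real_inner_comm y a]
  field_simp
  ring

lemma coeff_eq {f g : ι → ℝ} (h : ∑ i, f i • R.sroot i = ∑ i, g i • R.sroot i) :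
    ∀ i, f i = g i := by
  have h0 : ∑ i, (f i - g i) • R.sroot i = 0 := by
    simp only [sub_smul, Finset.sum_sub_distrib, h, sub_self]
  intro i
  have := Fintype.linearIndependent_iff.1 R.sroot_indep (f - g) (by simpa using h0) i
  simpa [sub_eq_zero] using this

lemma eq_zero_of_two_decomps {x : V} {c e : ι → ℕ} (hc : x = ∑ i, (c i : ℝ) • R.sroot i)
    (he : -x = ∑ i, (e i : ℝ) • R.sroot i) : x = 0 := by
  have h : ∑ i, ((c i : ℝ) + e i) • R.sroot i = ∑ i, (0 : ℝ) • R.sroot i := by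
    simp only [add_smul, Finset.sum_add_distrib, ← hc, ← he, add_neg_cancel, zero_smul,
      Finset.sum_const_zero]
  have hco := R.coeff_eq h
  have hzero : ∀ i, (c i : ℝ) = 0 := fun i => by
    have h1 := hco i
    have h2 : (0 : ℝ) ≤ c i := Nat.cast_nonneg _
    have h3 : (0 : ℝ) ≤ e i := Nat.cast_nonneg _
    linarith
  rw [hc]
  exact Finset.sum_eq_zero fun i _ => by rw [hzero i, zero_smul]

lemma pos_subset : R.pos ⊆ R.Δ := fun _ ha => ha.1

lemma neg_not_pos {a : V} (ha : a ∈ R.pos) : -a ∉ R.pos := by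
  rintro ⟨hmem, e, he⟩
  obtain ⟨hm, c, hc⟩ := ha
  exact R.root_ne_zero hm (R.eq_zero_of_two_decomps hc he)

lemma pos_or_neg {a : V} (ha : a ∈ R.Δ) : a ∈ R.pos ∨ -a ∈ R.pos := by
  rcases R.decomp a ha with ⟨c, hc⟩ | ⟨c, hc⟩
  · exact Or.inl ⟨ha, c, hc⟩
  · exact Or.inr ⟨R.neg_mem a ha, c, by rw [hc, neg_neg]⟩

lemma add_mem_pos {a b : V} (ha : a ∈ R.pos) (hb : b ∈ R.pos) (hab : a + b ∈ R.Δ) :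
    a + b ∈ R.pos := by
  obtain ⟨_, c, hc⟩ := ha
  obtain ⟨_, d, hd⟩ := hb
  refine ⟨hab, c + d, ?_⟩
  simp only [Pi.add_apply, Nat.cast_add, add_smul, Finset.sum_add_distrib, ← hc, ← hd]

lemma reflect_reflect {a : V} (ha : a ∈ R.Δ) (v : V) :
    R.reflect a (R.reflect a v) = v := by
  rw [R.reflect_apply a ha v, R.reflect_apply a ha]
  have h := (R.inner_self_pos' ha).ne'
  rw [inner_sub_right, real_inner_smul_right]
  have key : 2 * (⟪a, v⟫ - 2 * ⟪a, v⟫ / ⟪a, a⟫ * ⟪a, a⟫) / ⟪a, a⟫ = -(2 * ⟪a, v⟫ / ⟪a, a⟫) := by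
    field_simp
    ring
  rw [key, neg_smul, sub_neg_eq_add, sub_add_cancel]

lemma reflect_mul_self {a : V} (ha : a ∈ R.Δ) : R.reflect a * R.reflect a = 1 := by
  ext v
  exact R.reflect_reflect ha v

lemma reflect_inv {a : V} (ha : a ∈ R.Δ) : (R.reflect a)⁻¹ = R.reflect a :=
  inv_eq_of_mul_eq_one_right (R.reflect_mul_self ha)

lemma reflect_conj {u : V ≃ₗ[ℝ] V} (hu : Orth u) {a b : V} (ha : a ∈ R.Δ) (hb : b ∈ R.Δ)
    {c : ℝ} (hc : c ≠ 0) (hab : b = c • u a) : R.reflect b = u * R.reflect a * u⁻¹ := by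
  have haa := (R.inner_self_pos' ha).ne'
  ext v
  show R.reflect b v = u (R.reflect a (u.symm v))
  rw [R.reflect_apply b hb v, R.reflect_apply a ha (u.symm v), map_sub, map_smul,
    u.apply_symm_apply, hab]
  have h1 : ⟪c • u a, v⟫ = c * ⟪a, u.symm v⟫ := by
    rw [real_inner_smul_left]
    congr 1
    conv_lhs => rw [show v = u (u.symm v) from (u.apply_symm_apply v).symm]
    exact hu a (u.symm v)
  have h2 : ⟪c • u a, c • u a⟫ = c * c * ⟪a, a⟫ := by
    rw [real_inner_smul_left, real_inner_smul_right, hu]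
    ring
  rw [h1, h2, smul_smul]
  congr 2
  field_simp

lemma orth_one : Orth (1 : V ≃ₗ[ℝ] V) := fun _ _ => rfl

lemma orth_mul {u v : V ≃ₗ[ℝ] V} (hu : Orth u) (hv : Orth v) : Orth (u * v) :=
  fun x y => by rw [show (u * v) x = u (v x) from rfl, show (u * v) y = u (v y) from rfl, hu, hv]

lemma orth_inv {u : V ≃ₗ[ℝ] V} (hu : Orth u) : Orth u⁻¹ := fun x y => by
  have := hu (u⁻¹ x) (u⁻¹ y)
  rw [show u (u⁻¹ x) = x from u.apply_symm_apply x,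
    show u (u⁻¹ y) = y from u.apply_symm_apply y] at this
  exact this.symm

lemma W_orth {w : V ≃ₗ[ℝ] V} (hw : w ∈ R.W) : Orth w := by
  induction hw using Subgroup.closure_induction with
  | mem x hx => obtain ⟨i, rfl⟩ := hx; exact R.reflect_orth (R.sroot_mem i)
  | one => exact orth_one
  | mul x y _ _ hx hy => exact orth_mul hx hy
  | inv x _ hx => exact orth_inv hx

lemma W_maps {w : V ≃ₗ[ℝ] V} (hw : w ∈ R.W) : ∀ a ∈ R.Δ, w a ∈ R.Δ := by
  have key : (∀ a ∈ R.Δ, w a ∈ R.Δ) ∧ (∀ a ∈ R.Δ, w⁻¹ a ∈ R.Δ) := by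
    induction hw using Subgroup.closure_induction with
    | mem x hx =>
      obtain ⟨i, rfl⟩ := hx
      refine ⟨fun a ha => R.reflect_root_mem _ (R.sroot_mem i) a ha, fun a ha => ?_⟩
      rw [R.reflect_inv (R.sroot_mem i)]
      exact R.reflect_root_mem _ (R.sroot_mem i) a ha
    | one => exact ⟨fun a ha => ha, fun a ha => ha⟩
    | mul x y _ _ hx hy =>
      refine ⟨fun a ha => hx.1 _ (hy.1 a ha), fun a ha => ?_⟩
      rw [mul_inv_rev]
      exact hy.2 _ (hx.2 a ha)
    | inv x _ hx => exact ⟨hx.2, by rw [inv_inv]; exact hx.1⟩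
  exact key.1

lemma cs_eq {a b : V} (ha0 : a ≠ 0) (h : ⟪a, b⟫ * ⟪a, b⟫ = ⟪a, a⟫ * ⟪b, b⟫) :
    b = (⟪a, b⟫ / ⟪a, a⟫) • a := by
  have haa : ⟪a, a⟫ ≠ 0 := inner_self_ne_zero.2 ha0
  have hv : (⟪a, a⟫ • b - ⟪a, b⟫ • a : V) = 0 := by
    rw [← inner_self_eq_zero (𝕜 := ℝ)]
    simp only [inner_sub_left, inner_sub_right, real_inner_smul_left, real_inner_smul_right]
    have hc' : ⟪b, a⟫ = ⟪a, b⟫ := real_inner_comm a b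
    linear_combination (-⟪a, a⟫) * h + (-(⟪a, a⟫ * (⟪a, b⟫ + ⟪b, a⟫)) + ⟪a, a⟫ * ⟪b, a⟫) * hc' 
  have hkey : ⟪a, a⟫ • b = ⟪a, b⟫ • a := by rwa [sub_eq_zero] at hv
  calc b = (⟪a, a⟫⁻¹ * ⟪a, a⟫) • b := by rw [inv_mul_cancel₀ haa, one_smul]
    _ = ⟪a, a⟫⁻¹ • (⟪a, a⟫ • b) := by rw [mul_smul]
    _ = ⟪a, a⟫⁻¹ • (⟪a, b⟫ • a) := by rw [hkey]
    _ = (⟪a, b⟫ / ⟪a, a⟫) • a := by rw [smul_smul]; congr 1; ring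

lemma sum_root_mem {a b : V} (ha : a ∈ R.Δ) (hb : b ∈ R.Δ) (hab : ⟪a, b⟫ < 0)
    (hne : a ≠ -b) : a + b ∈ R.Δ := by
  obtain ⟨m, hm⟩ := R.crys b hb a ha
  obtain ⟨n, hn⟩ := R.crys a ha b hb
  have hbb := R.inner_self_pos' hb
  have haa := R.inner_self_pos' ha
  have hba : ⟪b, a⟫ < 0 := by rwa [real_inner_comm]
  have hm_neg : (m : ℝ) < 0 := by rw [← hm]; exact div_neg_of_neg_of_pos (by linarith) hbb
  have hn_neg : (n : ℝ) < 0 := by rw [← hn]; exact div_neg_of_neg_of_pos (by linarith) haa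
  by_cases hm1 : m = -1
  · have h := R.reflect_root_mem b hb a ha
    rw [R.reflect_apply b hb a, hm, hm1] at h
    simpa using h
  · by_cases hn1 : n = -1
    · have h := R.reflect_root_mem a ha b hb
      rw [R.reflect_apply a ha b, hn, hn1] at h
      rw [add_comm]
      simpa using h
    · exfalso
      have hm2 : (m : ℝ) ≤ -2 := by
        have h' : m ≤ -2 := by
          have : m < 0 := by exact_mod_cast hm_neg
          omega
        exact_mod_cast h'
      have hn2 : (n : ℝ) ≤ -2 := by
        have h' : n ≤ -2 := by
          have : n < 0 := by exact_mod_cast hn_neg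
          omega
        exact_mod_cast h'
      have e1 : 2 * ⟪b, a⟫ = m * ⟪b, b⟫ := by
        field_simp at hm; linarith [hm]
      have e2 : 2 * ⟪a, b⟫ = n * ⟪a, a⟫ := by
        field_simp at hn; linarith [hn]
      have hc : ⟪b, a⟫ = ⟪a, b⟫ := real_inner_comm a b
      have h4 : 4 * (⟪a, b⟫ * ⟪a, b⟫) = ((m : ℝ) * n) * (⟪a, a⟫ * ⟪b, b⟫) := by
        rw [show ((m : ℝ) * n) * (⟪a, a⟫ * ⟪b, b⟫) = ((m : ℝ) * ⟪b, b⟫) * ((n : ℝ) * ⟪a, a⟫)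
          from by ring, ← e1, ← e2, hc]
        ring
      have hcs : ⟪a, b⟫ * ⟪a, b⟫ ≤ ⟪a, a⟫ * ⟪b, b⟫ := real_inner_mul_inner_self_le a b
      have hmn4 : (4 : ℝ) ≤ (m : ℝ) * n := by nlinarith
      have heq : ⟪a, b⟫ * ⟪a, b⟫ = ⟪a, a⟫ * ⟪b, b⟫ := by nlinarith [mul_pos haa hbb]
      have hpar := cs_eq (R.root_ne_zero ha) heq
      set r := ⟪a, b⟫ / ⟪a, a⟫ with hr
      have hr_neg : r < 0 := div_neg_of_neg_of_pos hab haa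
      have hnr : (n : ℝ) = 2 * r := by rw [← hn, hr]; ring
      have hba' : ⟪b, a⟫ = r * ⟪a, a⟫ := by rw [hpar, real_inner_smul_left]
      have hbb' : ⟪b, b⟫ = r * (r * ⟪a, a⟫) := by
        rw [hpar, real_inner_smul_left, real_inner_smul_right]
      have h5 : 2 * r * ⟪a, a⟫ = (m : ℝ) * (r * r) * ⟪a, a⟫ := by
        rw [hba', hbb'] at e1; linear_combination e1
      have h6 : 2 * r = (m : ℝ) * (r * r) := mul_right_cancel₀ haa.ne' h5
      have h7 : ((m : ℝ) * r - 2) * r = 0 := by linear_combination -h6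
      have hmr : (m : ℝ) * r = 2 := by
        rcases mul_eq_zero.1 h7 with h' | h'
        · linarith
        · exact absurd h' hr_neg.ne
      have hr1 : r = -1 := by nlinarith
      exact hne (by rw [hpar, hr1, neg_one_smul, neg_neg])

lemma pos_inner_highest_nonneg {θ : V} (hθ : R.IsHighest θ) {γ : V} (hγ : γ ∈ R.pos) :
    0 ≤ ⟪γ, θ⟫ := by
  by_contra h
  push_neg at h
  have hγΔ := hγ.1
  have hθΔ := hθ.1.1
  have hne : γ ≠ -θ := by
    intro he
    exact R.neg_not_pos hθ.1 (he ▸ hγ)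
  have hsum : γ + θ ∈ R.Δ := R.sum_root_mem hγΔ hθΔ h hne
  have hsum_pos : γ + θ ∈ R.pos := R.add_mem_pos hγ hθ.1 hsum
  obtain ⟨e, he⟩ := hθ.2 _ hsum_pos
  -- θ - (γ + θ) = -γ = ∑ e
  obtain ⟨_, c, hc⟩ := hγ
  have hneg : -γ = ∑ i, (e i : ℝ) • R.sroot i := by rw [← he]; abel
  exact R.root_ne_zero hγΔ (R.eq_zero_of_two_decomps hc hneg)

lemma inner_highest_lt {θ : V} (hθ : R.IsHighest θ)
    (hlong : ∀ b ∈ R.Δ, ⟪b, b⟫ ≤ ⟪θ, θ⟫) {γ : V} (hγ : γ ∈ R.Δ) (hne : γ ≠ θ) :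
    ⟪γ, θ⟫ < ⟪θ, θ⟫ := by
  by_contra h
  push_neg at h
  have hθΔ := hθ.1.1
  have hθθ := R.inner_self_pos' hθΔ
  have hcs : ⟪θ, γ⟫ * ⟪θ, γ⟫ ≤ ⟪θ, θ⟫ * ⟪γ, γ⟫ := real_inner_mul_inner_self_le θ γ
  have hcom : ⟪θ, γ⟫ = ⟪γ, θ⟫ := real_inner_comm γ θ
  have hγγ : ⟪γ, γ⟫ ≤ ⟪θ, θ⟫ := hlong γ hγ
  have heq : ⟪θ, γ⟫ * ⟪θ, γ⟫ = ⟪θ, θ⟫ * ⟪γ, γ⟫ := by nlinarith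
  have heq2 : ⟪γ, θ⟫ = ⟪θ, θ⟫ := by nlinarith
  have hpar := cs_eq (R.root_ne_zero hθΔ) heq
  rw [hcom, heq2, div_self hθθ.ne', one_smul] at hpar
  exact hne hpar

lemma exists_word {w : V ≃ₗ[ℝ] V} (hw : w ∈ R.W) :
    ∃ l : List ι, (l.map fun i => R.reflect (R.sroot i)).prod = w := by
  induction hw using Subgroup.closure_induction with
  | mem x hx =>
    obtain ⟨i, rfl⟩ := hx
    exact ⟨[i], by simp⟩
  | one => exact ⟨[], by simp⟩
  | mul x y _ _ hx hy =>
    obtain ⟨l₁, h₁⟩ := hx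
    obtain ⟨l₂, h₂⟩ := hy
    exact ⟨l₁ ++ l₂, by rw [List.map_append, List.prod_append, h₁, h₂]⟩
  | inv x _ hx =>
    obtain ⟨l, hl⟩ := hx
    refine ⟨l.reverse, ?_⟩
    rw [← hl, List.prod_inv_reverse, List.map_map, List.map_reverse]
    have hmap : List.map ((fun x => x⁻¹) ∘ fun i => R.reflect (R.sroot i)) l =
        List.map (fun i => R.reflect (R.sroot i)) l := by
      apply List.map_congr_left
      intro i _
      exact R.reflect_inv (R.sroot_mem i)
    rw [hmap]

lemma len_le {w : V ≃ₗ[ℝ] V} {l : List ι}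
    (h : (l.map fun i => R.reflect (R.sroot i)).prod = w) : R.len w ≤ l.length :=
  Nat.sInf_le ⟨l, rfl, h⟩

lemma len_spec {w : V ≃ₗ[ℝ] V} (hw : w ∈ R.W) :
    ∃ l : List ι, (l.map fun i => R.reflect (R.sroot i)).prod = w ∧ l.length = R.len w := by
  obtain ⟨l, hl⟩ := R.exists_word hw
  have hmem : R.len w ∈ {n | ∃ l : List ι, l.length = n ∧
      (l.map fun i => R.reflect (R.sroot i)).prod = w} :=
    Nat.sInf_mem ⟨l.length, l, rfl, hl⟩
  obtain ⟨l', h1, h2⟩ := hmem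
  exact ⟨l', h2, h1⟩

open Classical in
lemma parallel_of_reflect_not_pos {i : ι} {ν : V} (hν : ν ∈ R.pos)
    (h : R.reflect (R.sroot i) ν ∉ R.pos) : ∃ c : ℝ, c ≠ 0 ∧ ν = c • R.sroot i := by
  have hνΔ := hν.1
  have hiΔ := R.sroot_mem i
  have hβΔ : R.reflect (R.sroot i) ν ∈ R.Δ := R.reflect_root_mem _ hiΔ ν hνΔ
  rcases R.pos_or_neg hβΔ with h1 | h1
  · exact absurd h1 h
  obtain ⟨_, e, he⟩ := h1
  obtain ⟨_, c, hc⟩ := hν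
  set m := 2 * ⟪R.sroot i, ν⟫ / ⟪R.sroot i, R.sroot i⟫ with hm
  have hrefl : R.reflect (R.sroot i) ν = ν - m • R.sroot i := R.reflect_apply _ hiΔ ν
  have key : ∑ j, ((c j : ℝ) + e j) • R.sroot j =
      ∑ j, (if j = i then m else 0) • R.sroot j := by
    have hrhs : ∑ j, (if j = i then m else 0) • R.sroot j = m • R.sroot i := by
      simp only [ite_smul, zero_smul, Finset.sum_ite_eq', Finset.mem_univ, if_true]
    rw [hrhs]
    have : ∑ j, ((c j : ℝ) + e j) • R.sroot j = ν + -(R.reflect (R.sroot i) ν) := by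
      simp only [add_smul, Finset.sum_add_distrib, ← hc, ← he]
    rw [this, hrefl]
    abel
  have hco := R.coeff_eq key
  have hcj : ∀ j, j ≠ i → (c j : ℝ) = 0 := by
    intro j hj
    have h1 := hco j
    rw [if_neg hj] at h1
    have h2 : (0 : ℝ) ≤ c j := Nat.cast_nonneg _
    have h3 : (0 : ℝ) ≤ e j := Nat.cast_nonneg _
    linarith
  have hν_eq : ν = (c i : ℝ) • R.sroot i := by
    rw [hc]
    rw [Finset.sum_eq_single i]
    · intro j _ hj
      rw [hcj j hj, zero_smul]
    · intro hmem
      exact absurd (Finset.mem_univ i) hmem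
  refine ⟨(c i : ℝ), ?_, hν_eq⟩
  intro h0
  rw [h0, zero_smul] at hν_eq
  exact R.root_ne_zero hνΔ hν_eq

lemma reflect_sroot_mem_W (i : ι) : R.reflect (R.sroot i) ∈ R.W :=
  Subgroup.subset_closure ⟨i, rfl⟩

lemma reflect_mem_W_aux : ∀ n : ℕ, ∀ ν : V, ∀ c : ι → ℕ, ν ∈ R.Δ →
    ν = ∑ i, (c i : ℝ) • R.sroot i → ∑ i, c i = n → R.reflect ν ∈ R.W := by
  intro n
  induction n using Nat.strong_induction_on with
  | _ n ih =>
    intro ν c hνΔ hc hn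
    classical
    have hνpos : ν ∈ R.pos := ⟨hνΔ, c, hc⟩
    have hνν := R.inner_self_pos' hνΔ
    have hsum : ⟪ν, ν⟫ = ∑ i, (c i : ℝ) * ⟪R.sroot i, ν⟫ := by
      nth_rewrite 1 [hc]
      rw [sum_inner]
      exact Finset.sum_congr rfl fun i _ => real_inner_smul_left _ _ _
    have hex : ∃ i, (0 : ℝ) < (c i : ℝ) * ⟪R.sroot i, ν⟫ := by
      by_contra hno
      push_neg at hno
      have : ∑ i, (c i : ℝ) * ⟪R.sroot i, ν⟫ ≤ 0 :=
        Finset.sum_nonpos fun i _ => hno i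
      linarith [hsum ▸ hνν]
    obtain ⟨i, hi⟩ := hex
    have hip : 0 < ⟪R.sroot i, ν⟫ := by
      rcases lt_or_ge 0 ⟪R.sroot i, ν⟫ with h | h
      · exact h
      · nlinarith [Nat.cast_nonneg (α := ℝ) (c i)]
    have hiΔ := R.sroot_mem i
    by_cases hp : R.reflect (R.sroot i) ν ∈ R.pos
    · -- height decreases
      set ν' := R.reflect (R.sroot i) ν with hν'
      have hν'Δ : ν' ∈ R.Δ := R.reflect_root_mem _ hiΔ ν hνΔ
      obtain ⟨_, d, hd⟩ := hp
      set m := 2 * ⟪R.sroot i, ν⟫ / ⟪R.sroot i, R.sroot i⟫ with hmdef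
      have hm_pos : 0 < m := div_pos (by linarith) (R.inner_self_pos' hiΔ)
      obtain ⟨k, hk⟩ := R.crys _ hiΔ ν hνΔ
      have hm1 : 1 ≤ m := by
        rw [hmdef, hk]
        have : 0 < k := by
          have : (0 : ℝ) < (k : ℝ) := hk ▸ hm_pos
          exact_mod_cast this
        exact_mod_cast this
      have hrefl : ν' = ν - m • R.sroot i := R.reflect_apply _ hiΔ ν
      have key : ∑ j, ((d j : ℝ) + if j = i then m else 0) • R.sroot j =
          ∑ j, (c j : ℝ) • R.sroot j := by
        simp only [add_smul, Finset.sum_add_distrib]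
        have hrhs : ∑ j, (if j = i then m else 0) • R.sroot j = m • R.sroot i := by
          simp only [ite_smul, zero_smul, Finset.sum_ite_eq', Finset.mem_univ, if_true]
        rw [hrhs, ← hd, ← hc, hrefl]
        abel
      have hco := R.coeff_eq key
      have hdj : ∀ j, j ≠ i → d j = c j := by
        intro j hj
        have h1 := hco j
        rw [if_neg hj, add_zero] at h1
        exact_mod_cast h1
      have hdi : d i < c i := by
        have h1 := hco i
        rw [if_pos rfl] at h1
        have : (d i : ℝ) < (c i : ℝ) := by linarith
        exact_mod_cast this
      have hlt : ∑ j, d j < n := by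
        rw [← hn]
        apply Finset.sum_lt_sum
        · intro j _
          by_cases hj : j = i
          · subst hj; exact hdi.le
          · exact (hdj j hj).le
        · exact ⟨i, Finset.mem_univ i, hdi⟩
      have hW' := ih _ hlt ν' d hν'Δ hd rfl
      have hconj : R.reflect ν = R.reflect (R.sroot i) * R.reflect ν' *
          (R.reflect (R.sroot i))⁻¹ := by
        apply R.reflect_conj (R.reflect_orth hiΔ) hν'Δ hνΔ (c := 1) one_ne_zero
        rw [one_smul, hν', R.reflect_reflect hiΔ]
      rw [hconj]
      exact mul_mem (mul_mem (R.reflect_sroot_mem_W i) hW')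
        (inv_mem (R.reflect_sroot_mem_W i))
    · obtain ⟨r, hr0, hrν⟩ := R.parallel_of_reflect_not_pos hνpos hp
      have hconj : R.reflect ν = 1 * R.reflect (R.sroot i) * (1 : V ≃ₗ[ℝ] V)⁻¹ := by
        apply R.reflect_conj orth_one hiΔ hνΔ hr0
        simpa using hrν
      rw [hconj, one_mul, inv_one, mul_one]
      exact R.reflect_sroot_mem_W i

lemma reflect_mem_W {ν : V} (hν : ν ∈ R.Δ) : R.reflect ν ∈ R.W := by
  rcases R.pos_or_neg hν with h | h
  · obtain ⟨_, c, hc⟩ := h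
    exact R.reflect_mem_W_aux _ ν c hν hc rfl
  · obtain ⟨hmem, c, hc⟩ := h
    have hconj : R.reflect ν = 1 * R.reflect (-ν) * (1 : V ≃ₗ[ℝ] V)⁻¹ := by
      apply R.reflect_conj orth_one hmem hν (c := -1) (by norm_num)
      simp
    rw [hconj, one_mul, inv_one, mul_one]
    exact R.reflect_mem_W_aux _ (-ν) c hmem hc rfl

lemma key_aux : ∀ (l : List ι) (ν : V), ν ∈ R.pos →
    -(((l.map fun i => R.reflect (R.sroot i)).prod)⁻¹ ν) ∈ R.pos →
    ∃ l' : List ι, l'.length + 1 = l.length ∧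
      (l'.map fun i => R.reflect (R.sroot i)).prod =
        R.reflect ν * (l.map fun i => R.reflect (R.sroot i)).prod := by
  intro l
  induction l with
  | nil =>
    intro ν h1 h2
    simp only [List.map_nil, List.prod_nil, inv_one] at h2
    exact absurd h2 (R.neg_not_pos h1)
  | cons i l ih =>
    intro ν hν hw
    have hνΔ := hν.1
    have hiΔ := R.sroot_mem i
    set s : ι → (V ≃ₗ[ℝ] V) := fun j => R.reflect (R.sroot j) with hs
    set p := (l.map s).prod with hp
    have hcons : ((i :: l).map s).prod = s i * p := by
      rw [List.map_cons, List.prod_cons]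
    set β := R.reflect (R.sroot i) ν with hβ
    have hβΔ : β ∈ R.Δ := R.reflect_root_mem _ hiΔ ν hνΔ
    have happ : (((i :: l).map s).prod)⁻¹ ν = p⁻¹ β := by
      rw [hcons, mul_inv_rev]
      show p⁻¹ ((s i)⁻¹ ν) = p⁻¹ β
      congr 1
      show (s i)⁻¹ ν = β
      rw [hs]
      simp only
      rw [R.reflect_inv hiΔ]
    by_cases hβp : β ∈ R.pos
    · have h2 : -(p⁻¹ β) ∈ R.pos := by rw [← happ]; exact hw
      obtain ⟨l', hlen, hprod⟩ := ih β hβp h2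
      have hconj : R.reflect ν = s i * R.reflect β * s i := by
        have := R.reflect_conj (R.reflect_orth hiΔ) hβΔ hνΔ (c := 1) one_ne_zero
          (by rw [one_smul, hβ, R.reflect_reflect hiΔ])
        rw [this]
        congr 1
        exact R.reflect_inv hiΔ
      refine ⟨i :: l', by simp [← hlen], ?_⟩
      rw [List.map_cons, List.prod_cons, hprod, hcons, hconj]
      have hss : s i * s i = 1 := R.reflect_mul_self hiΔ
      have hgr : s i * R.reflect β * s i * (s i * p) =
          s i * (R.reflect β * ((s i * s i) * p)) := by group
      rw [hgr, hss, one_mul]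
    · obtain ⟨r, hr0, hrν⟩ := R.parallel_of_reflect_not_pos hν hβp
      have hrefl : R.reflect ν = s i := by
        have := R.reflect_conj orth_one hiΔ hνΔ hr0 (by simpa using hrν)
        rw [this, one_mul, inv_one, mul_one]
      refine ⟨l, by simp, ?_⟩
      rw [hcons, hrefl, ← mul_assoc, R.reflect_mul_self hiΔ, one_mul]

lemma len_lt {w : V ≃ₗ[ℝ] V} {ν : V} (hw : w ∈ R.W) (hν : ν ∈ R.pos)
    (hneg : -(w⁻¹ ν) ∈ R.pos) : R.len (R.reflect ν * w) < R.len w := by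
  obtain ⟨l, hprod, hlen⟩ := R.len_spec hw
  obtain ⟨l', h1, h2⟩ := R.key_aux l ν hν (by rw [hprod]; exact hneg)
  have hle : R.len (R.reflect ν * w) ≤ l'.length := R.len_le (by rw [h2, hprod])
  omega

end RSD


/-- For a long positive root `μ`, the inversion set of the inverse of
the minimal-length element taking the highest root `θ` to `μ` is
`{ν ∈ Δ⁺ ∣ (ν, μ∨) = -1}`. -/
theorem inversion_set_of_inverse_of_w_theta_mu
    {ι V : Type*} [Fintype ι] [NormedAddCommGroup V] [InnerProductSpace ℝ V]
    (R : RSD ι V) (θ μ : V) (hθ : R.IsHighest θ) (hμl : R.IsLong μ) (hμ : μ ∈ R.pos)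
    (w : V ≃ₗ[ℝ] V) (hw : w ∈ R.W) (hwθ : w θ = μ)
    (hmin : ∀ w' ∈ R.W, w' θ = μ → R.len w ≤ R.len w') :
    R.N w⁻¹ = {ν ∈ R.pos | ⟪ν, R.coroot μ⟫ = -1} := by
  have hθpos := hθ.1
  have hθΔ : θ ∈ R.Δ := hθpos.1
  have hμΔ : μ ∈ R.Δ := hμ.1
  have horth : Orth w := R.W_orth hw
  have hmm : ⟪μ, μ⟫ = ⟪θ, θ⟫ := by rw [← hwθ]; exact horth θ θ
  have hμμ := R.inner_self_pos' hμΔ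
  have hθθ := R.inner_self_pos' hθΔ
  have hθlong : ∀ b ∈ R.Δ, ⟪b, b⟫ ≤ ⟪θ, θ⟫ := fun b hb => by
    rw [← hmm]; exact hμl.2 b hb
  have hcor : ∀ x : V, ⟪x, R.coroot μ⟫ = 2 * ⟪μ, x⟫ / ⟪μ, μ⟫ := fun x => by
    simp only [RSD.coroot]
    rw [real_inner_smul_right, real_inner_comm x μ]
    ring
  ext ν
  simp only [RSD.N, Set.mem_setOf_eq]
  constructor
  · rintro ⟨hνp, hγp⟩
    refine ⟨hνp, ?_⟩
    have hνΔ := hνp.1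
    set γ := -(w⁻¹ ν) with hγdef
    have hγΔ : γ ∈ R.Δ := hγp.1
    have hν_eq : ν = -(w γ) := by
      rw [hγdef, map_neg, neg_neg]
      exact (w.apply_symm_apply ν).symm
    have hinner : ⟪ν, μ⟫ = -⟪γ, θ⟫ := by
      rw [hν_eq, ← hwθ, inner_neg_left, horth]
    have h1 : 0 ≤ ⟪γ, θ⟫ := R.pos_inner_highest_nonneg hθ hγp
    have h2 : γ ≠ θ := by
      intro h
      have hν2 : ν = -μ := by rw [hν_eq, h, hwθ]
      exact R.neg_not_pos hνp (by rw [hν2, neg_neg]; exact hμ)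
    have h3 : ⟪γ, θ⟫ < ⟪θ, θ⟫ := R.inner_highest_lt hθ hθlong hγΔ h2
    obtain ⟨n, hn⟩ := R.crys μ hμΔ ν hνΔ
    have hval : ⟪ν, R.coroot μ⟫ = (n : ℝ) := by rw [hcor, hn]
    have hμν : ⟪μ, ν⟫ = -⟪γ, θ⟫ := by rw [real_inner_comm]; exact hinner
    have hbound1 : (n : ℝ) ≤ 0 := by
      rw [← hn, hμν]
      apply div_nonpos_of_nonpos_of_nonneg (by linarith) hμμ.le
    have hbound2 : (-2 : ℝ) < (n : ℝ) := by
      rw [← hn, hμν, hmm, lt_div_iff₀ hθθ]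
      nlinarith
    have hn01 : n = 0 ∨ n = -1 := by
      have b1 : n ≤ 0 := by exact_mod_cast hbound1
      have b2 : -2 < n := by exact_mod_cast hbound2
      omega
    rcases hn01 with h0 | h1'
    · exfalso
      have hz : 2 * ⟪μ, ν⟫ / ⟪μ, μ⟫ = 0 := by rw [hn, h0]; norm_num
      have hνμ0 : ⟪ν, μ⟫ = 0 := by
        field_simp [hμμ.ne'] at hz
        rw [real_inner_comm]
        linarith
      have hsW : R.reflect ν ∈ R.W := R.reflect_mem_W hνΔ
      have hθ' : (R.reflect ν * w) θ = μ := by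
        show R.reflect ν (w θ) = μ
        rw [hwθ, R.reflect_apply ν hνΔ μ, hνμ0]
        simp
      have hlt := R.len_lt hw hνp hγp
      have hge := hmin _ (mul_mem hsW hw) hθ'
      omega
    · rw [hval, h1']
      norm_num
  · rintro ⟨hνp, hpair⟩
    refine ⟨hνp, ?_⟩
    have hνΔ := hνp.1
    have hwi : w⁻¹ ∈ R.W := inv_mem hw
    have hγΔ : w⁻¹ ν ∈ R.Δ := R.W_maps hwi ν hνΔ
    have hip : ⟪w⁻¹ ν, θ⟫ = ⟪ν, μ⟫ := by
      have h := horth (w⁻¹ ν) θ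
      rw [show w (w⁻¹ ν) = ν from w.apply_symm_apply ν, hwθ] at h
      exact h.symm
    have hneg : ⟪ν, μ⟫ < 0 := by
      rw [hcor ν] at hpair
      have h2 : 2 * ⟪μ, ν⟫ = -⟪μ, μ⟫ := by
        field_simp [hμμ.ne'] at hpair
        linarith
      have : ⟪μ, ν⟫ < 0 := by linarith
      rwa [real_inner_comm]
    rcases R.pos_or_neg hγΔ with h | h
    · have h0 := R.pos_inner_highest_nonneg hθ h
      rw [hip] at h0
      linarith
    · exact h
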